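/- arXiv:1201.3587 — 4 statements merged into one kernel-verified Lean document; each statement's English description precedes it below -/
import Mathlib

section
/- Let G be the spanning subgraph of the hypercube Q_n obtained by deleting every edge whose endpoints lie in layers 2r-1 and 2r for some r (where layer m consists of vertices with exactly m ones in their binary representation). Then G contains no 4-cycle (i.e. no subgraph isomorphic to Q_2). -/
def Qcube (n : ℕ) : SimpleGraph (Fin n → Bool) where
  Adj x y := hammingDist x y = 1
  symm := ⟨by intro x y h; rwa [hammingDist_comm]⟩
  loopless := ⟨by intro x h; simp [hammingDist_self] at h⟩

def wt {n : ℕ} (x : Fin n → Bool) : ℕ := (Finset.univ.filter fun i => x i = true).card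

lemma L1 {n : ℕ} {x y : Fin n → Bool} (h : hammingDist x y = 1) :
    ∃ i, ∀ j, x j ≠ y j ↔ j = i := by
  rw [hammingDist, Finset.card_eq_one] at h
  obtain ⟨i0, hi⟩ := h
  refine ⟨i0, fun j => ?_⟩
  constructor
  · intro hj
    have : j ∈ Finset.filter (fun j => x j ≠ y j) Finset.univ := by simp [hj]
    rw [hi] at this; simpa using this
  · intro hj
    have : j ∈ Finset.filter (fun j => x j ≠ y j) Finset.univ := by rw [hi]; simp [hj]
    simpa using this

lemma L2 {n : ℕ} {x y : Fin n → Bool} {i : Fin n}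
    (hdiff : ∀ j, x j ≠ y j ↔ j = i) (hx : x i = false) :
    wt y = wt x + 1 := by
  have hy : y i = true := by
    have := (hdiff i).2 rfl; rw [hx] at this; simpa using this.symm
  have hset : (Finset.univ.filter fun j => y j = true)
      = insert i (Finset.univ.filter fun j => x j = true) := by
    ext j
    simp only [Finset.mem_filter, Finset.mem_univ, true_and, Finset.mem_insert]
    by_cases hj : j = i
    · subst hj; simp [hy]
    · have : x j = y j := by
        by_contra hc; exact hj ((hdiff j).1 hc)
      rw [← this]; tauto
  have hnotmem : i ∉ (Finset.univ.filter fun j => x j = true) := by simp [hx]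
  rw [wt, wt, hset, Finset.card_insert_of_notMem hnotmem]

lemma L3 {x y : ℕ} (hxy : x = y + 1)
    (h : ¬ ∃ r : ℕ, 1 ≤ r ∧ ({x, y} : Set ℕ) = {2 * r - 1, 2 * r}) : Even y := by
  by_contra ho
  rw [Nat.not_even_iff_odd] at ho
  obtain ⟨m, hm⟩ := ho
  exact h ⟨m + 1, by omega, by ext t; simp; omega⟩

lemma L3' {x y : ℕ} (hxy : y = x + 1)
    (h : ¬ ∃ r : ℕ, 1 ≤ r ∧ ({x, y} : Set ℕ) = {2 * r - 1, 2 * r}) : Even x :=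
  L3 hxy (by rwa [Set.pair_comm] at h)

lemma symmdiff {n : ℕ} {x y : Fin n → Bool} {i : Fin n}
    (h : ∀ j, x j ≠ y j ↔ j = i) : ∀ j, y j ≠ x j ↔ j = i := by
  intro j; rw [← h j, ne_comm]

lemma eqof {n : ℕ} {x y : Fin n → Bool} {i : Fin n}
    (h : ∀ j, x j ≠ y j ↔ j = i) {m : Fin n} (hm : m ≠ i) : x m = y m := by
  by_contra hc; exact hm ((h m).1 hc)

lemma bool_trans : ∀ p q r : Bool, p ≠ q → q ≠ r → p = r := by decide
lemma bool_res : ∀ p q r : Bool, p ≠ q → p ≠ r → q = r := by decide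
lemma bool_flip_t : ∀ p q : Bool, p ≠ q → p = true → q = false := by decide
lemma bool_flip_f : ∀ p q : Bool, p ≠ q → p = false → q = true := by decide

/-- Deleting from `Q_n` every edge whose endpoints lie in layers `2r-1` and `2r`
(for some `r ≥ 1`) yields a graph containing no subgraph isomorphic to `Q_2`
(the 4-cycle). -/
theorem stmt0 (n : ℕ) (G : SimpleGraph (Fin n → Bool))
    (hG : ∀ x y, G.Adj x y ↔ (Qcube n).Adj x y ∧
      ¬ ∃ r : ℕ, 1 ≤ r ∧ ({wt x, wt y} : Set ℕ) = {2 * r - 1, 2 * r}) :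
    ¬ ∃ f : (Fin 2 → Bool) → (Fin n → Bool), Function.Injective f ∧
      ∀ a b, (Qcube 2).Adj a b → G.Adj (f a) (f b) := by
  rintro ⟨f, hinj, hadj⟩
  set a := f ![false, false] with ha
  set b := f ![false, true] with hb
  set c := f ![true, true] with hc
  set d := f ![true, false] with hd
  have ne_bd : b ≠ d := fun h => by simpa using congrFun (hinj h) 0
  have ne_ac : a ≠ c := fun h => by simpa using congrFun (hinj h) 0
  have hab := (hG _ _).1 (hadj ![false, false] ![false, true] (show hammingDist ![false, false] ![false, true] = 1 by decide))
  have hbc := (hG _ _).1 (hadj ![false, true] ![true, true] (show hammingDist ![false, true] ![true, true] = 1 by decide))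
  have had := (hG _ _).1 (hadj ![false, false] ![true, false] (show hammingDist ![false, false] ![true, false] = 1 by decide))
  have hdc := (hG _ _).1 (hadj ![true, false] ![true, true] (show hammingDist ![true, false] ![true, true] = 1 by decide))
  obtain ⟨hab1, hab2⟩ := hab
  obtain ⟨hbc1, hbc2⟩ := hbc
  obtain ⟨had1, had2⟩ := had
  obtain ⟨hdc1, hdc2⟩ := hdc
  obtain ⟨i, hi⟩ := L1 hab1
  obtain ⟨j, hj⟩ := L1 hbc1
  obtain ⟨k, hk⟩ := L1 had1
  obtain ⟨l, hl⟩ := L1 hdc1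
  -- i ≠ j
  have hij : i ≠ j := by
    intro hij
    apply ne_ac
    funext m
    by_cases hm : m = i
    · subst hm
      exact bool_trans _ _ _ ((hi m).2 rfl) ((hj m).2 hij)
    · exact (eqof hi hm).trans (eqof hj (fun hc => hm (hc.trans hij.symm)))
  -- i ≠ k
  have hik : i ≠ k := by
    intro hik
    apply ne_bd
    funext m
    by_cases hm : m = i
    · subst hm
      exact bool_res _ _ _ ((hi m).2 rfl) ((hk m).2 hik)
    · exact ((eqof hi hm).symm).trans (eqof hk (fun hc => hm (hc.trans hik.symm)))
  -- i = l
  have hil : i = l := by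
    by_contra hil
    have h1 : a i ≠ b i := (hi i).2 rfl
    have h2 : b i = c i := eqof hj hij
    have h3 : a i = d i := eqof hk hik
    have h4 : d i = c i := eqof hl hil
    exact h1 (by rw [h3, h4, ← h2])
  -- j = k
  have hjk : j = k := by
    by_contra hjk
    have hjl : j ≠ l := fun hc => hij (hil.trans hc.symm)
    have h1 : a j = b j := eqof hi (Ne.symm hij)
    have h2 : b j ≠ c j := (hj j).2 rfl
    have h3 : a j = d j := eqof hk hjk
    have h4 : d j = c j := eqof hl hjl
    exact h2 (by rw [← h1, h3, h4])
  -- weights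
  have hba := symmdiff hi
  have hcb := symmdiff hj
  have hda := symmdiff hk
  cases hai : a i with
  | false =>
    have hB : wt b = wt a + 1 := L2 hi hai
    have hEA : Even (wt a) := L3' hB hab2
    cases haj : a j with
    | false =>
      have hbj : b j = false := (eqof hi (Ne.symm hij)).symm.trans haj
      have hC : wt c = wt b + 1 := L2 hj hbj
      have hEB : Even (wt b) := L3' hC hbc2
      obtain ⟨p, hp⟩ := hEA; obtain ⟨q, hq⟩ := hEB; omega
    | true =>
      have hdk : d k = false := bool_flip_t _ _ ((hk k).2 rfl) (hjk ▸ haj)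
      have hA : wt a = wt d + 1 := L2 hda hdk
      have hED : Even (wt d) := L3 hA had2
      obtain ⟨p, hp⟩ := hEA; obtain ⟨q, hq⟩ := hED; omega
  | true =>
    have hbi : b i = false := bool_flip_t _ _ ((hi i).2 rfl) hai
    have hA : wt a = wt b + 1 := L2 hba hbi
    have hEB : Even (wt b) := L3 hA hab2
    cases haj : a j with
    | false =>
      have hD : wt d = wt a + 1 := L2 hk (hjk ▸ haj)
      have hEA : Even (wt a) := L3' hD had2
      obtain ⟨p, hp⟩ := hEA; obtain ⟨q, hq⟩ := hEB; omega
    | true =>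
      have hbj : b j = true := (eqof hi (Ne.symm hij)).symm.trans haj
      have hcj : c j = false := bool_flip_t _ _ ((hj j).2 rfl) hbj
      have hB : wt b = wt c + 1 := L2 hcb hcj
      have hEC : Even (wt c) := L3 hB hbc2
      obtain ⟨p, hp⟩ := hEB; obtain ⟨q, hq⟩ := hEC; omega
end

section
/- The induced subgraph of Q_n obtained by deleting all vertices whose Hamming weight is congruent to 0 mod 3 contains no copy of the graph R_2 formed by removing a single vertex from Q_3; consequently π_v(R_2) ≥ 2/3. -/
open Filter

/-- The set `S ⊆ V(Q_n)` contains no copy of `R_2` (`Q_3` minus one vertex):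
there is no `3`-dimensional subcube of `Q_n` all of whose vertices except
possibly one corner lie in `S`. -/
def R2Free (n : ℕ) (S : Set (Fin n → Bool)) : Prop :=
  ¬ ∃ (f : (Fin 3 → Bool) → (Fin n → Bool)) (v₀ : Fin 3 → Bool),
    Function.Injective f ∧
    (∀ a b, (Qcube 3).Adj a b → (Qcube n).Adj (f a) (f b)) ∧
    ∀ a, a ≠ v₀ → f a ∈ S


def bflip {n : ℕ} (x : Fin n → Bool) (i : Fin n) : Fin n → Bool :=
  Function.update x i (!(x i))

lemma flip_apply_self {n} (x : Fin n → Bool) (i : Fin n) : bflip x i i = !(x i) := by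
  simp [bflip]

lemma flip_apply_ne {n} (x : Fin n → Bool) {i j : Fin n} (h : j ≠ i) : bflip x i j = x j := by
  simp [bflip, Function.update_of_ne h]

lemma bflip_flip {n} (x : Fin n → Bool) (i : Fin n) : bflip (bflip x i) i = x := by
  funext j
  by_cases h : j = i
  · subst h; simp [bflip]
  · rw [flip_apply_ne _ h, flip_apply_ne _ h]

lemma adj_iff {n} {x y : Fin n → Bool} : (Qcube n).Adj x y ↔ ∃ i, y = bflip x i := by
  constructor
  · intro h
    change hammingDist x y = 1 at h
    rw [hammingDist, Finset.card_eq_one] at h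
    obtain ⟨i, hi⟩ := h
    refine ⟨i, funext fun j => ?_⟩
    by_cases hj : j = i
    · subst hj
      have : j ∈ ({j} : Finset (Fin n)) := Finset.mem_singleton_self j
      rw [← hi, Finset.mem_filter] at this
      rcases Bool.eq_false_or_eq_true (x j) with h1 | h1 <;>
        rcases Bool.eq_false_or_eq_true (y j) with h2 | h2 <;>
          simp_all [flip_apply_self]
    · have : j ∉ ({i} : Finset (Fin n)) := by simp [hj]
      rw [← hi, Finset.mem_filter] at this
      simp only [Finset.mem_univ, true_and, not_not] at this
      rw [flip_apply_ne _ hj, this]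
  · rintro ⟨i, rfl⟩
    change hammingDist x (bflip x i) = 1
    rw [hammingDist, Finset.card_eq_one]
    refine ⟨i, ?_⟩
    ext j
    simp only [Finset.mem_filter, Finset.mem_univ, true_and, Finset.mem_singleton]
    constructor
    · intro h; by_contra hj; exact h (by rw [flip_apply_ne _ hj])
    · intro h; subst h; simp [flip_apply_self]

lemma wt_bflip {n} (x : Fin n → Bool) (i : Fin n) :
    (wt (bflip x i) : ℤ) = (wt x : ℤ) + (if x i then -1 else 1) := by
  have hw : ∀ y : Fin n → Bool, (wt y : ℤ) = ∑ j, (if y j then (1:ℤ) else 0) := by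
    intro y
    rw [wt, Finset.card_filter]
    push_cast
    rfl
  classical
  have h1 : (fun j => if bflip x i j = true then (1:ℤ) else 0)
      = Function.update (fun j => if x j = true then (1:ℤ) else 0) i (if !(x i) then 1 else 0) := by
    funext j
    by_cases hj : j = i
    · subst hj; simp [bflip]
    · simp [bflip, Function.update_of_ne hj]
  rw [hw, hw]
  calc (∑ j, if bflip x i j = true then (1:ℤ) else 0)
      = ∑ j, Function.update (fun j => if x j = true then (1:ℤ) else 0) i
          (if !(x i) then 1 else 0) j := by rw [h1]
    _ = (if !(x i) then 1 else 0) + ∑ j ∈ Finset.univ \ {i}, (if x j = true then (1:ℤ) else 0) := by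
        rw [Finset.sum_update_of_mem (Finset.mem_univ i)]
    _ = (∑ j, if x j = true then (1:ℤ) else 0) + (if x i = true then -1 else 1) := by
        rw [Finset.sum_eq_sum_sdiff_singleton_add (Finset.mem_univ i)
          (fun j => if x j = true then (1:ℤ) else 0)]
        cases hxi : x i <;> simp [hxi] <;> ring

lemma diamond {n} (B : Fin n → Bool) {i2 i3 : Fin n} (h : i2 ≠ i3) (c : Fin n → Bool)
    (hc : c ≠ B) (h2 : ∃ j, c = bflip (bflip B i2) j) (h3 : ∃ j, c = bflip (bflip B i3) j) :
    c = bflip (bflip B i2) i3 := by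
  obtain ⟨j, hj⟩ := h2
  obtain ⟨j', hj'⟩ := h3
  have hji2 : j ≠ i2 := by rintro rfl; rw [bflip_flip] at hj; exact hc hj
  have hji3 : j' ≠ i3 := by rintro rfl; rw [bflip_flip] at hj'; exact hc hj'
  have hc2 : c i2 = !(B i2) := by
    rw [hj, flip_apply_ne _ (Ne.symm hji2), flip_apply_self]
  have hj'2 : j' = i2 := by
    by_contra hne
    rw [hj', flip_apply_ne _ (Ne.symm hne), flip_apply_ne _ h] at hc2
    simp at hc2
  subst hj'2
  have hc3 : c i3 = !(B i3) := by
    rw [hj', flip_apply_ne _ (Ne.symm h), flip_apply_self]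
  have hji3' : j = i3 := by
    by_contra hne
    rw [hj, flip_apply_ne _ (Ne.symm hne), flip_apply_ne _ (Ne.symm h)] at hc3
    simp at hc3
  rw [hji3'] at hj
  exact hj

lemma two_zeros_zmod : ∀ (W : ZMod 3) (E : Fin 3 → ZMod 3), (∀ k, E k = 1 ∨ E k = 2) →
    ∃ a c : Fin 3 → Bool, a ≠ c ∧ W + (∑ k, if a k then E k else 0) = 0 ∧
      W + (∑ k, if c k then E k else 0) = 0 := by decide

lemma part1 (n : ℕ) : R2Free n {x : Fin n → Bool | ¬ (wt x % 3 = 0)} := by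
  rintro ⟨f, v₀, hinj, hadj, hS⟩
  have adj3 : ∀ a c : Fin 3 → Bool, hammingDist a c = 1 → ∃ i, f c = bflip (f a) i :=
    fun a c h => adj_iff.1 (hadj a c h)
  have hne : ∀ a c : Fin 3 → Bool, a ≠ c → f a ≠ f c := fun a c h hf => h (hinj hf)
  set B := f ![false, false, false] with hB
  obtain ⟨i1, h1⟩ := adj3 ![false,false,false] ![true,false,false] (by decide)
  obtain ⟨i2, h2⟩ := adj3 ![false,false,false] ![false,true,false] (by decide)
  obtain ⟨i3, h3⟩ := adj3 ![false,false,false] ![false,false,true] (by decide)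
  have d12 : i1 ≠ i2 := by rintro rfl; exact hne _ _ (by decide) (h1.trans h2.symm)
  have d13 : i1 ≠ i3 := by rintro rfl; exact hne _ _ (by decide) (h1.trans h3.symm)
  have d23 : i2 ≠ i3 := by rintro rfl; exact hne _ _ (by decide) (h2.trans h3.symm)
  have e110 : f ![true,true,false] = bflip (bflip B i1) i2 := by
    refine diamond B d12 _ (hne _ _ (by decide)) ?_ ?_
    · obtain ⟨j, hj⟩ := adj3 ![true,false,false] ![true,true,false] (by decide)
      exact ⟨j, by rw [hj, h1]⟩
    · obtain ⟨j, hj⟩ := adj3 ![false,true,false] ![true,true,false] (by decide)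
      exact ⟨j, by rw [hj, h2]⟩
  have e101 : f ![true,false,true] = bflip (bflip B i1) i3 := by
    refine diamond B d13 _ (hne _ _ (by decide)) ?_ ?_
    · obtain ⟨j, hj⟩ := adj3 ![true,false,false] ![true,false,true] (by decide)
      exact ⟨j, by rw [hj, h1]⟩
    · obtain ⟨j, hj⟩ := adj3 ![false,false,true] ![true,false,true] (by decide)
      exact ⟨j, by rw [hj, h3]⟩
  have e011 : f ![false,true,true] = bflip (bflip B i2) i3 := by
    refine diamond B d23 _ (hne _ _ (by decide)) ?_ ?_
    · obtain ⟨j, hj⟩ := adj3 ![false,true,false] ![false,true,true] (by decide)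
      exact ⟨j, by rw [hj, h2]⟩
    · obtain ⟨j, hj⟩ := adj3 ![false,false,true] ![false,true,true] (by decide)
      exact ⟨j, by rw [hj, h3]⟩
  have e111 : f ![true,true,true] = bflip (bflip (bflip B i1) i2) i3 := by
    refine diamond (bflip B i1) d23 _ ?_ ?_ ?_
    · rw [← h1]; exact hne _ _ (by decide)
    · obtain ⟨j, hj⟩ := adj3 ![true,true,false] ![true,true,true] (by decide)
      exact ⟨j, by rw [hj, e110]⟩
    · obtain ⟨j, hj⟩ := adj3 ![true,false,true] ![true,true,true] (by decide)
      exact ⟨j, by rw [hj, e101]⟩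
  set w : ℤ := (wt B : ℤ) with hw
  set ε : Fin 3 → ℤ := fun k => if B (![i1,i2,i3] k) then -1 else 1 with hε
  have w000 : (wt (f ![false,false,false]) : ℤ) = w := rfl
  have w100 : (wt (f ![true,false,false]) : ℤ) = w + ε 0 := by
    rw [h1, wt_bflip]; simp +zetaDelta [hε]; rfl
  have w010 : (wt (f ![false,true,false]) : ℤ) = w + ε 1 := by
    rw [h2, wt_bflip]; simp +zetaDelta [hε]; rfl
  have w001 : (wt (f ![false,false,true]) : ℤ) = w + ε 2 := by
    rw [h3, wt_bflip]; simp +zetaDelta [hε]; rfl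
  have w110 : (wt (f ![true,true,false]) : ℤ) = w + ε 0 + ε 1 := by
    rw [e110, wt_bflip, wt_bflip, flip_apply_ne _ (Ne.symm d12)]; simp +zetaDelta [hε]; rfl
  have w101 : (wt (f ![true,false,true]) : ℤ) = w + ε 0 + ε 2 := by
    rw [e101, wt_bflip, wt_bflip, flip_apply_ne _ (Ne.symm d13)]; simp +zetaDelta [hε]; rfl
  have w011 : (wt (f ![false,true,true]) : ℤ) = w + ε 1 + ε 2 := by
    rw [e011, wt_bflip, wt_bflip, flip_apply_ne _ (Ne.symm d23)]; simp +zetaDelta [hε]; rfl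
  have w111 : (wt (f ![true,true,true]) : ℤ) = w + ε 0 + ε 1 + ε 2 := by
    rw [e111, wt_bflip, flip_apply_ne _ (Ne.symm d23), flip_apply_ne _ (Ne.symm d13),
      wt_bflip, flip_apply_ne _ (Ne.symm d12), wt_bflip]
    simp +zetaDelta [hε]; rfl
  have key : ∀ a : Fin 3 → Bool, (wt (f a) : ℤ) = w + ∑ k, (if a k then ε k else 0) := by
    intro a
    have ha : a = ![a 0, a 1, a 2] := by
      funext j; fin_cases j <;> rfl
    rw [ha]
    cases h0 : a 0 <;> cases h1' : a 1 <;> cases h2' : a 2 <;>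
      simp [Fin.sum_univ_three, w000, w100, w010, w001, w110, w101, w011, w111] <;>
      try ring
  set W : ZMod 3 := ((w : ℤ) : ZMod 3) with hW
  set E : Fin 3 → ZMod 3 := fun k => ((ε k : ℤ) : ZMod 3) with hE
  have hEk : ∀ k, E k = 1 ∨ E k = 2 := by
    intro k
    by_cases h : B (![i1,i2,i3] k) = true
    · right; simp [hE, hε, h]; decide
    · left; simp [hE, hε, h]
  obtain ⟨a, c, hac, hA, hC⟩ := two_zeros_zmod W E hEk
  have hz : ∀ x : Fin 3 → Bool, W + (∑ k, if x k then E k else 0) = 0 → wt (f x) % 3 = 0 := by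
    intro x hx
    have hcast : ((wt (f x) : ℤ) : ZMod 3) = W + ∑ k, (if x k then E k else 0) := by
      rw [key x, Int.cast_add, Int.cast_sum, hW]
      congr 1
      refine Finset.sum_congr rfl fun k _ => ?_
      split_ifs <;> simp [hE]
    rw [hx] at hcast
    have hdvd : (3:ℤ) ∣ (wt (f x) : ℤ) := by
      rwa [ZMod.intCast_zmod_eq_zero_iff_dvd] at hcast
    have : (3:ℕ) ∣ wt (f x) := by exact_mod_cast hdvd
    omega
  by_cases hav : a = v₀
  · have hcne : c ≠ v₀ := fun h => hac (hav.trans h.symm)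
    exact hS c hcne (hz c hC)
  · exact hS a hav (hz a hA)

def cnt (n r : ℕ) : ℕ := (Finset.univ.filter fun x : Fin n → Bool => wt x % 3 = r).card

lemma wt_cons {n : ℕ} (b : Bool) (x : Fin n → Bool) :
    wt (Fin.cons b x) = (if b then 1 else 0) + wt x := by
  rw [wt, wt, Finset.card_filter, Finset.card_filter, Fin.sum_univ_succ]
  simp [Fin.cons_zero, Fin.cons_succ]

lemma cnt_succ (n r : ℕ) (hr : r < 3) :
    cnt (n+1) r = cnt n r + cnt n ((r+2) % 3) := by
  classical
  rw [cnt, cnt, cnt, Finset.card_filter, Finset.card_filter, Finset.card_filter]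
  rw [← Fintype.sum_equiv (Fin.consEquiv (fun _ : Fin (n+1) => Bool))
    (fun p : Bool × (Fin n → Bool) => if wt (Fin.cons p.1 p.2) % 3 = r then 1 else 0)
    (fun y => if wt y % 3 = r then 1 else 0) (fun p => rfl)]
  rw [Fintype.sum_prod_type, Fintype.sum_bool]
  rw [← Finset.sum_add_distrib, ← Finset.sum_add_distrib]
  refine Finset.sum_congr rfl fun x _ => ?_
  simp only [wt_cons]
  norm_num
  split_ifs <;> omega

lemma cnt_sum (n : ℕ) : cnt n 0 + cnt n 1 + cnt n 2 = 2 ^ n := by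
  have h : ∀ x : Fin n → Bool,
      ((if wt x % 3 = 0 then 1 else 0) + (if wt x % 3 = 1 then 1 else 0)
        + (if wt x % 3 = 2 then (1:ℕ) else 0)) = 1 := by
    intro x; split_ifs <;> omega
  have : cnt n 0 + cnt n 1 + cnt n 2 = ∑ x : Fin n → Bool, 1 := by
    rw [cnt, cnt, cnt, Finset.card_filter, Finset.card_filter, Finset.card_filter,
      ← Finset.sum_add_distrib, ← Finset.sum_add_distrib]
    exact Finset.sum_congr rfl fun x _ => h x
  rw [this, Finset.sum_const, Finset.card_univ, smul_eq_mul, mul_one, Fintype.card_fun]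
  simp

lemma cnt_zero_r : cnt 0 0 = 1 ∧ cnt 0 1 = 0 ∧ cnt 0 2 = 0 := by
  refine ⟨?_, ?_, ?_⟩ <;> decide

lemma cnt_inv (n : ℕ) :
    (((cnt n 0 : ℤ) - cnt n 1, (cnt n 1 : ℤ) - cnt n 2) = (1,0) ∨
     ((cnt n 0 : ℤ) - cnt n 1, (cnt n 1 : ℤ) - cnt n 2) = (0,1) ∨
     ((cnt n 0 : ℤ) - cnt n 1, (cnt n 1 : ℤ) - cnt n 2) = (-1,1) ∨
     ((cnt n 0 : ℤ) - cnt n 1, (cnt n 1 : ℤ) - cnt n 2) = (-1,0) ∨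
     ((cnt n 0 : ℤ) - cnt n 1, (cnt n 1 : ℤ) - cnt n 2) = (0,-1) ∨
     ((cnt n 0 : ℤ) - cnt n 1, (cnt n 1 : ℤ) - cnt n 2) = (1,-1)) := by
  induction n with
  | zero => left; simp [cnt_zero_r.1, cnt_zero_r.2.1, cnt_zero_r.2.2]
  | succ n ih =>
    have r0 := cnt_succ n 0 (by norm_num)
    have r1 := cnt_succ n 1 (by norm_num)
    have r2 := cnt_succ n 2 (by norm_num)
    norm_num at r0 r1 r2
    simp only [Prod.mk.injEq] at ih ⊢
    omega

lemma cnt_bound (n : ℕ) : 3 * cnt n 0 ≤ 2 ^ n + 2 := by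
  have h1 := cnt_inv n
  have h2 := cnt_sum n
  simp only [Prod.mk.injEq] at h1
  omega

/-- Deleting all vertices of `Q_n` whose Hamming weight is `≡ 0 (mod 3)` leaves an
induced subgraph with no copy of `R_2` (`Q_3` minus a vertex); consequently
`π_v(R_2) ≥ 2/3`. -/
theorem stmt9 (b : ℕ → ℝ)
    (hb : ∀ n, b n = sSup {x : ℝ | ∃ S : Set (Fin n → Bool), R2Free n S ∧
      x = (S.ncard : ℝ) / (2 ^ n : ℝ)}) :
    (∀ n : ℕ, R2Free n {x : Fin n → Bool | ¬ (wt x % 3 = 0)}) ∧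
    ∀ ε : ℝ, 0 < ε → ∃ N : ℕ, ∀ n ≥ N, 2 / 3 - ε ≤ b n := by
  constructor
  · exact part1
  · intro ε hε
    obtain ⟨N, hN⟩ := exists_pow_lt_of_lt_one hε (by norm_num : (1:ℝ)/2 < 1)
    refine ⟨N, fun n hn => ?_⟩
    classical
    set S : Set (Fin n → Bool) := {x | ¬ (wt x % 3 = 0)} with hS
    -- cardinality of S
    have hcard : S.ncard = 2 ^ n - cnt n 0 := by
      rw [hS, Set.ncard_eq_toFinset_card']
      have : {x : Fin n → Bool | ¬ (wt x % 3 = 0)}.toFinset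
          = Finset.univ.filter fun x : Fin n → Bool => ¬ (wt x % 3 = 0) := by
        ext x; simp
      rw [this]
      have hsplit := Finset.card_filter_add_card_filter_not
        (s := (Finset.univ : Finset (Fin n → Bool)))
        (p := fun x : Fin n → Bool => wt x % 3 = 0)
      rw [Finset.card_univ, Fintype.card_fun] at hsplit
      have : (Finset.univ.filter fun x : Fin n → Bool => wt x % 3 = 0).card = cnt n 0 := rfl
      simp at hsplit
      omega
    have hb3 : 3 * cnt n 0 ≤ 2 ^ n + 2 := cnt_bound n
    have hMpos : (0:ℝ) < (2:ℝ) ^ n := by positivity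
    -- the density of S is in the sup set
    have hmem : ((S.ncard : ℝ) / (2 ^ n : ℝ)) ∈
        {x : ℝ | ∃ S : Set (Fin n → Bool), R2Free n S ∧ x = (S.ncard : ℝ) / (2 ^ n : ℝ)} :=
      ⟨S, part1 n, rfl⟩
    have hbdd : BddAbove
        {x : ℝ | ∃ S : Set (Fin n → Bool), R2Free n S ∧ x = (S.ncard : ℝ) / (2 ^ n : ℝ)} := by
      refine ⟨1, fun x hx => ?_⟩
      obtain ⟨T, _, rfl⟩ := hx
      have hT : T.ncard ≤ 2 ^ n := by
        have := Set.ncard_le_ncard (Set.subset_univ T) Set.finite_univ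
        rwa [Set.ncard_univ, Nat.card_eq_fintype_card, Fintype.card_fun,
          Fintype.card_bool, Fintype.card_fin] at this
      rw [div_le_one hMpos]
      exact_mod_cast hT
    have hle : ((S.ncard : ℝ) / (2 ^ n : ℝ)) ≤ b n := by
      rw [hb n]; exact le_csSup hbdd hmem
    refine le_trans ?_ hle
    -- numeric estimate
    have hcnt_le : cnt n 0 ≤ 2 ^ n := by
      have := cnt_sum n; omega
    have hcastcard : (S.ncard : ℝ) = (2:ℝ) ^ n - (cnt n 0 : ℝ) := by
      rw [hcard]; push_cast [hcnt_le]; ring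
    have hinv : (1:ℝ) / 2 ^ n < ε := by
      calc (1:ℝ) / 2 ^ n = ((1:ℝ)/2) ^ n := by rw [div_pow, one_pow]
        _ ≤ ((1:ℝ)/2) ^ N := by
            exact pow_le_pow_of_le_one (by norm_num) (by norm_num) hn
        _ < ε := hN
    have h3C : 3 * (cnt n 0 : ℝ) ≤ (2:ℝ) ^ n + 2 := by exact_mod_cast hb3
    have key : (2:ℝ)/3 - 1/2^n ≤ (S.ncard : ℝ) / (2 ^ n : ℝ) := by
      rw [hcastcard, le_div_iff₀ hMpos]
      have e : ((2:ℝ)/3 - 1/2^n) * 2^n = 2/3 * 2^n - 1 := by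
        field_simp
      rw [e]
      linarith
    have : (2:ℝ)/3 - ε ≤ (2:ℝ)/3 - 1/2^n := by linarith
    linarith
end

section
/- Let M be an n-vertex 3-uniform hypergraph with the maximum number of edges subject to being F-free for a family F of 3-graphs, where n ≥ 5. Then the difference between the maximum and minimum degree densities of vertices of M is at most 2/(n-1), where the degree density of v is deg(v)/binom(n-1,2). -/
/-- A 3-uniform hypergraph `M` on `Fin n` contains a member of the family `F`
(a family of 3-graphs, each given by its number of vertices and edge set) as a
subhypergraph. -/
def ContainsMember {n : ℕ} (F : Set (Σ k : ℕ, Finset (Finset (Fin k))))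
    (M : Finset (Finset (Fin n))) : Prop :=
  ∃ A ∈ F, ∃ f : Fin A.1 → Fin n, Function.Injective f ∧
    ∀ e ∈ A.2, e.image f ∈ M

/-- The degree of a vertex in a 3-uniform hypergraph. -/
def hdeg {n : ℕ} (M : Finset (Finset (Fin n))) (v : Fin n) : ℕ :=
  (M.filter fun e => v ∈ e).card

lemma key_deg (n : ℕ) (hn : 5 ≤ n)
    (F : Set (Σ k : ℕ, Finset (Finset (Fin k))))
    (hFcov : ∀ A ∈ F, ∀ x y : Fin A.1, x ≠ y → ∃ e ∈ A.2, x ∈ e ∧ y ∈ e)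
    (M : Finset (Finset (Fin n))) (hM3 : ∀ e ∈ M, e.card = 3)
    (hMfree : ¬ ContainsMember F M)
    (hMmax : ∀ M' : Finset (Finset (Fin n)), (∀ e ∈ M', e.card = 3) →
      ¬ ContainsMember F M' → M'.card ≤ M.card)
    (u v : Fin n) (huv : u ≠ v) : hdeg M u ≤ hdeg M v + (n - 2) := by
  classical
  set σ : Fin n ≃ Fin n := Equiv.swap u v with hσ
  have hmemσ : ∀ (e : Finset (Fin n)) (x : Fin n), x ∈ e.image σ ↔ σ x ∈ e := by
    intro e x
    constructor
    · rintro h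
      obtain ⟨y, hy, rfl⟩ := Finset.mem_image.1 h
      rwa [Equiv.swap_apply_self]
    · intro h
      exact Finset.mem_image.2 ⟨σ x, h, by rw [Equiv.swap_apply_self]⟩
  have himgimg : ∀ (e : Finset (Fin n)), (e.image σ).image σ = e := by
    intro e
    rw [Finset.image_image]
    have : (⇑σ ∘ ⇑σ) = id := by
      funext x; simp [hσ, Equiv.swap_apply_self]
    rw [this, Finset.image_id]
  set C := M.filter (fun e => u ∈ e ∧ v ∉ e) with hC
  set M' := (M.filter fun e => v ∉ e) ∪ C.image (fun e => e.image σ) with hM'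
  -- membership characterization
  have hmemM' : ∀ e, e ∈ M' ↔ (e ∈ M ∧ v ∉ e) ∨
      ∃ e0, (e0 ∈ M ∧ u ∈ e0 ∧ v ∉ e0) ∧ e = e0.image σ := by
    intro e
    simp [hM', hC, Finset.mem_union, Finset.mem_filter, Finset.mem_image, and_assoc, eq_comm]
  -- 3-uniformity
  have h3 : ∀ e ∈ M', e.card = 3 := by
    intro e he
    rcases (hmemM' e).1 he with ⟨heM, _⟩ | ⟨e0, ⟨he0M, _, _⟩, rfl⟩
    · exact hM3 _ heM
    · rw [Finset.card_image_of_injective _ σ.injective]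
      exact hM3 _ he0M
  -- edges of M' containing v come from clones, and clones contain v, not u
  have hfree : ¬ ContainsMember F M' := by
    rintro ⟨A, hA, f, hf, hfe⟩
    by_cases hv : ∃ y, f y = v
    · obtain ⟨y, hy⟩ := hv
      by_cases hu : ∃ x, f x = u
      · obtain ⟨x, hx⟩ := hu
        have hxy : x ≠ y := by
          rintro rfl; exact huv (hx ▸ hy ▸ rfl)
        obtain ⟨e, heA, hxe, hye⟩ := hFcov A hA x y hxy
        have hE := hfe e heA
        have hvE : v ∈ e.image f := Finset.mem_image.2 ⟨y, hye, hy⟩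
        have huE : u ∈ e.image f := Finset.mem_image.2 ⟨x, hxe, hx⟩
        rcases (hmemM' _).1 hE with ⟨_, hnv⟩ | ⟨e0, ⟨_, _, hnv0⟩, heq⟩
        · exact hnv hvE
        · rw [heq] at huE
          rw [hmemσ] at huE
          simp [hσ, Equiv.swap_apply_left] at huE
          exact hnv0 huE
      · -- v in range, u not: swap
        push_neg at hu
        apply hMfree
        refine ⟨A, hA, σ ∘ f, σ.injective.comp hf, ?_⟩
        intro e heA
        have hE := hfe e heA
        rw [← Finset.image_image]
        rcases (hmemM' _).1 hE with ⟨hEM, hnv⟩ | ⟨e0, ⟨he0M, _, _⟩, heq⟩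
        · have hnu : u ∉ e.image f := by
            intro h
            obtain ⟨x, _, hx⟩ := Finset.mem_image.1 h
            exact hu x hx
          have : (e.image f).image σ = e.image f := by
            apply Finset.image_congr (g := id) ?_ |>.trans Finset.image_id
            intro x hx
            exact Equiv.swap_apply_of_ne_of_ne (fun h => hnu (h ▸ hx)) (fun h => hnv (h ▸ hx))
          rwa [this]
        · rw [heq, himgimg]; exact he0M
    · -- v not in range
      push_neg at hv
      apply hMfree
      refine ⟨A, hA, f, hf, ?_⟩
      intro e heA
      have hE := hfe e heA
      rcases (hmemM' _).1 hE with ⟨hEM, _⟩ | ⟨e0, ⟨_, hu0, _⟩, heq⟩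
      · exact hEM
      · exfalso
        have : v ∈ e.image f := by
          rw [heq, hmemσ]
          simpa [hσ, Equiv.swap_apply_right] using hu0
        obtain ⟨x, _, hx⟩ := Finset.mem_image.1 this
        exact hv x hx
  have hle := hMmax M' h3 hfree
  -- cardinality computations
  have hdisj : Disjoint (M.filter fun e => v ∉ e) (C.image (fun e => e.image σ)) := by
    rw [Finset.disjoint_left]
    intro e he hce
    obtain ⟨e0, he0, rfl⟩ := Finset.mem_image.1 hce
    have hu0 : u ∈ e0 := ((Finset.mem_filter.1 he0).2).1
    have : v ∈ e0.image σ := by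
      rw [hmemσ]; simpa [hσ, Equiv.swap_apply_right] using hu0
    exact (Finset.mem_filter.1 he).2 this
  have hcardM' : M'.card = (M.filter fun e => v ∉ e).card + C.card := by
    rw [hM', Finset.card_union_of_disjoint hdisj,
      Finset.card_image_of_injective _ (Finset.image_injective σ.injective)]
  have hsplitv : (M.filter fun e => v ∈ e).card + (M.filter fun e => v ∉ e).card = M.card :=
    Finset.card_filter_add_card_filter_not _
  have hsplitu : (M.filter fun e => u ∈ e ∧ v ∈ e).card + C.card
      = (M.filter fun e => u ∈ e).card := by
    have := Finset.card_filter_add_card_filter_not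
      (s := M.filter fun e => u ∈ e) (p := fun e => v ∈ e)
    rw [Finset.filter_filter, Finset.filter_filter] at this
    exact this
  -- codegree bound
  have hduv : (M.filter fun e => u ∈ e ∧ v ∈ e).card ≤ n - 2 := by
    have hsub : ({u, v} : Finset (Fin n)).card = 2 := by
      rw [Finset.card_insert_of_notMem (by simpa using huv), Finset.card_singleton]
    have hinj : Set.InjOn (fun e => e \ ({u, v} : Finset (Fin n)))
        ↑(M.filter fun e => u ∈ e ∧ v ∈ e) := by
      intro e1 h1 e2 h2 h
      simp only [Finset.coe_filter, Set.mem_setOf_eq, Finset.mem_coe] at h1 h2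
      have hs1 : ({u, v} : Finset (Fin n)) ⊆ e1 := by
        intro x hx; rcases Finset.mem_insert.1 hx with rfl | hx
        · exact h1.2.1
        · rw [Finset.mem_singleton.1 hx]; exact h1.2.2
      have hs2 : ({u, v} : Finset (Fin n)) ⊆ e2 := by
        intro x hx; rcases Finset.mem_insert.1 hx with rfl | hx
        · exact h2.2.1
        · rw [Finset.mem_singleton.1 hx]; exact h2.2.2
      simp only at h
      rw [← Finset.sdiff_union_of_subset hs1, ← Finset.sdiff_union_of_subset hs2, h]
    have hmaps : ∀ e ∈ (M.filter fun e => u ∈ e ∧ v ∈ e),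
        (e \ {u, v}) ∈ (Finset.univ \ ({u, v} : Finset (Fin n))).powersetCard 1 := by
      intro e he
      rw [Finset.mem_filter] at he
      have hs : ({u, v} : Finset (Fin n)) ⊆ e := by
        intro x hx; rcases Finset.mem_insert.1 hx with rfl | hx
        · exact he.2.1
        · rw [Finset.mem_singleton.1 hx]; exact he.2.2
      rw [Finset.mem_powersetCard]
      constructor
      · exact Finset.sdiff_subset_sdiff (Finset.subset_univ _) subset_rfl
      · rw [Finset.card_sdiff_of_subset hs, hM3 _ he.1, hsub]
    calc (M.filter fun e => u ∈ e ∧ v ∈ e).card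
        ≤ ((Finset.univ \ ({u, v} : Finset (Fin n))).powersetCard 1).card :=
          Finset.card_le_card_of_injOn _ hmaps hinj
      _ = n - 2 := by
          rw [Finset.card_powersetCard, Finset.card_sdiff_of_subset (Finset.subset_univ _),
            Finset.card_univ, Fintype.card_fin, hsub, Nat.choose_one_right]
  rw [hcardM'] at hle
  have : hdeg M v = (M.filter fun e => v ∈ e).card := rfl
  have hu : hdeg M u = (M.filter fun e => u ∈ e).card := rfl
  omega

/-- If `M` is an `n`-vertex 3-uniform hypergraph with the maximum number of edges
subject to being `F`-free (for a family `F` of covering 3-graphs), and `n ≥ 5`,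
then the maximum and minimum degree densities of `M` differ by at most `2/(n-1)`,
where the degree density of `v` is `deg(v)/C(n-1,2)`. -/
theorem stmt11 (n : ℕ) (hn : 5 ≤ n)
    (F : Set (Σ k : ℕ, Finset (Finset (Fin k))))
    (hF3 : ∀ A ∈ F, ∀ e ∈ Sigma.snd A, e.card = 3)
    (hFcov : ∀ A ∈ F, ∀ x y : Fin A.1, x ≠ y → ∃ e ∈ A.2, x ∈ e ∧ y ∈ e)
    (M : Finset (Finset (Fin n))) (hM3 : ∀ e ∈ M, e.card = 3)
    (hMfree : ¬ ContainsMember F M)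
    (hMmax : ∀ M' : Finset (Finset (Fin n)), (∀ e ∈ M', e.card = 3) →
      ¬ ContainsMember F M' → M'.card ≤ M.card) :
    ∀ u v : Fin n,
      (hdeg M u : ℝ) / ((n - 1).choose 2 : ℝ) - (hdeg M v : ℝ) / ((n - 1).choose 2 : ℝ)
        ≤ 2 / ((n : ℝ) - 1) := by
  intro u v
  have hn1 : (1:ℝ) < (n:ℝ) := by
    have : (5:ℝ) ≤ (n:ℝ) := by exact_mod_cast hn
    linarith
  have hc : ((n - 1).choose 2 : ℝ) = ((n:ℝ) - 1) * ((n:ℝ) - 2) / 2 := by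
    rw [Nat.cast_choose_two]
    have h1 : ((n - 1 : ℕ) : ℝ) = (n:ℝ) - 1 := by
      rw [Nat.cast_sub (by omega)]; norm_num
    rw [h1]; ring
  have hcpos : (0:ℝ) < ((n - 1).choose 2 : ℝ) := by
    rw [hc]
    have : (5:ℝ) ≤ (n:ℝ) := by exact_mod_cast hn
    nlinarith
  by_cases huv : u = v
  · subst huv
    simp only [sub_self]
    apply div_nonneg (by norm_num)
    linarith
  · have key := key_deg n hn F hFcov M hM3 hMfree hMmax u v huv
    have hkey : (hdeg M u : ℝ) ≤ (hdeg M v : ℝ) + ((n:ℝ) - 2) := by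
      have h2 : ((n - 2 : ℕ) : ℝ) = (n:ℝ) - 2 := by
        rw [Nat.cast_sub (by omega)]; norm_num
      calc (hdeg M u : ℝ) ≤ ((hdeg M v + (n - 2) : ℕ) : ℝ) := by exact_mod_cast key
        _ = (hdeg M v : ℝ) + ((n:ℝ) - 2) := by push_cast [h2]; ring
    rw [div_sub_div_same, div_le_div_iff₀ hcpos (by linarith)]
    rw [hc]
    have : (5:ℝ) ≤ (n:ℝ) := by exact_mod_cast hn
    nlinarith [hkey]
end

section
/- For flags over a fixed type σ in a large graph G, the product of subflag densities approximately factorizes: for σ-flags F_a, F_b of size m and an embedding θ of σ into G, p(F_a,θ;G)·p(F_b,θ;G) = p(F_a,F_b,θ;G) + O(1/|V(G)|), where p(F_a,F_b,θ;G) is the probability that two independently chosen random m-sets, each containing im(θ) and intersecting exactly in im(θ), induce flags isomorphic to F_a and F_b respectively. -/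
/-- `R` (an `m`-set of vertices of `G` containing the image of the labelling `θ`)
induces a flag isomorphic to the flag `(F, l)` (a graph `F` on `Fin m` with label
map `l : Fin s → Fin m`): there is a bijection of `Fin m` onto `R` carrying the
labels to `θ` and edges of `F` exactly to edges of `G`. -/
def FlagCopy {s m : ℕ} {V : Type*} (G : SimpleGraph V) (θ : Fin s → V)
    (F : SimpleGraph (Fin m)) (l : Fin s → Fin m) (R : Finset V) : Prop :=
  ∃ e : Fin m → V, Function.Injective e ∧ Set.range e = ↑R ∧
    (∀ i, e (l i) = θ i) ∧ ∀ x y, F.Adj x y ↔ G.Adj (e x) (e y)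

/-- `p(F,θ;G)`: the probability that a uniformly random `m`-set of vertices of `G`
containing `im(θ)` induces a flag isomorphic to `F`. -/
noncomputable def pFlag {s m : ℕ} {V : Type*} (G : SimpleGraph V) (θ : Fin s → V)
    (F : SimpleGraph (Fin m)) (l : Fin s → Fin m) : ℝ :=
  (({R : Finset V | R.card = m ∧ Set.range θ ⊆ ↑R ∧ FlagCopy G θ F l R}).ncard : ℝ) /
    (({R : Finset V | R.card = m ∧ Set.range θ ⊆ ↑R}).ncard : ℝ)

/-- `p(F_a,F_b,θ;G)`: the probability that two independently chosen random
`m`-sets, each containing `im(θ)` and intersecting exactly in `im(θ)`, induce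
flags isomorphic to `F_a` and `F_b` respectively. -/
noncomputable def pFlagPair {s m : ℕ} {V : Type*} (G : SimpleGraph V) (θ : Fin s → V)
    (Fa Fb : SimpleGraph (Fin m)) (la lb : Fin s → Fin m) : ℝ :=
  (({P : Finset V × Finset V | P.1.card = m ∧ P.2.card = m ∧
      (↑P.1 ∩ ↑P.2 : Set V) = Set.range θ ∧
      FlagCopy G θ Fa la P.1 ∧ FlagCopy G θ Fb lb P.2}).ncard : ℝ) /
    (({P : Finset V × Finset V | P.1.card = m ∧ P.2.card = m ∧
      (↑P.1 ∩ ↑P.2 : Set V) = Set.range θ}).ncard : ℝ)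


section Aux

open Finset

private lemma count_supersets {V : Type*} [Fintype V] [DecidableEq V] (m : ℕ) (T : Finset V)
    (h : T.card ≤ m) :
    (Finset.univ.filter (fun R : Finset V => R.card = m ∧ T ⊆ R)).card
      = (Fintype.card V - T.card).choose (m - T.card) := by
  rw [← Finset.card_compl T, ← Finset.card_powersetCard]
  apply Finset.card_bij' (fun R _ => R \ T) (fun S _ => S ∪ T)
  · intro R hR
    simp only [mem_filter, mem_univ, true_and] at hR
    simp only [Finset.mem_powersetCard]
    constructor
    · intro x hx
      simp only [Finset.mem_sdiff] at hx
      simp [hx.2]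
    · rw [Finset.card_sdiff_of_subset hR.2, hR.1]
  · intro S hS
    simp only [Finset.mem_powersetCard] at hS
    have hdisj : Disjoint S T := by
      refine Finset.disjoint_left.mpr ?_
      intro a haS haT
      have := hS.1 haS
      simp [haT] at this
    simp only [mem_filter, mem_univ, true_and]
    refine ⟨?_, Finset.subset_union_right⟩
    rw [Finset.card_union_of_disjoint hdisj, hS.2]
    omega
  · intro R hR
    simp only [mem_filter, mem_univ, true_and] at hR
    exact Finset.sdiff_union_of_subset hR.2
  · intro S hS
    simp only [Finset.mem_powersetCard] at hS
    have hdisj : Disjoint S T := by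
      refine Finset.disjoint_left.mpr ?_
      intro a haS haT
      have := hS.1 haS
      simp [haT] at this
    exact Finset.union_sdiff_cancel_right hdisj

private lemma ratio_mem (a b : ℕ) (h : a ≤ b) : 0 ≤ (a:ℝ)/b ∧ (a:ℝ)/b ≤ 1 := by
  constructor
  · positivity
  · rcases Nat.eq_zero_or_pos b with hb | hb
    · subst hb; simp at h; simp [h]
    · rw [div_le_one (by exact_mod_cast hb)]; exact_mod_cast h

private lemma pFlag_bounds {s m : ℕ} {V : Type} [Fintype V] (G : SimpleGraph V) (θ : Fin s → V)
    (F : SimpleGraph (Fin m)) (l : Fin s → Fin m) :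
    0 ≤ pFlag G θ F l ∧ pFlag G θ F l ≤ 1 := by
  unfold pFlag
  apply ratio_mem
  exact Set.ncard_le_ncard (fun R hR => ⟨hR.1, hR.2.1⟩) (Set.toFinite _)

private lemma pFlagPair_bounds {s m : ℕ} {V : Type} [Fintype V] (G : SimpleGraph V)
    (θ : Fin s → V) (Fa Fb : SimpleGraph (Fin m)) (la lb : Fin s → Fin m) :
    0 ≤ pFlagPair G θ Fa Fb la lb ∧ pFlagPair G θ Fa Fb la lb ≤ 1 := by
  unfold pFlagPair
  apply ratio_mem
  exact Set.ncard_le_ncard (fun P hP => ⟨hP.1, hP.2.1, hP.2.2.1⟩) (Set.toFinite _)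

private lemma key_arith (A B D P Q eps n k : ℕ)
    (hAD : A ≤ D) (hBD : B ≤ D) (hQP : Q ≤ P) (hPD : P ≤ D^2)
    (hABQ : A*B ≤ Q + eps) (hDP : D^2 ≤ P + eps) (hQAB : Q ≤ A*B)
    (heps : n * eps ≤ k^2 * D^2) (hD : 0 < D) (hn : 2*k^2 < n) :
    |((A:ℝ)/D) * ((B:ℝ)/D) - (Q:ℝ)/P| ≤ 2*(k:ℝ)^2/n := by
  have hDR : (0:ℝ) < D := by exact_mod_cast hD
  have hnR : (0:ℝ) < n := by
    have : 0 < n := by omega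
    exact_mod_cast this
  have hd : (0:ℝ) < (D:ℝ)^2 := by positivity
  have hAD' : (A:ℝ) ≤ D := by exact_mod_cast hAD
  have hBD' : (B:ℝ) ≤ D := by exact_mod_cast hBD
  have hQP' : (Q:ℝ) ≤ P := by exact_mod_cast hQP
  have hPD' : (P:ℝ) ≤ (D:ℝ)^2 := by exact_mod_cast hPD
  have hABQ' : (A:ℝ)*B ≤ (Q:ℝ) + eps := by exact_mod_cast hABQ
  have hDP' : ((D:ℝ))^2 ≤ (P:ℝ) + eps := by exact_mod_cast hDP
  have hQAB' : (Q:ℝ) ≤ (A:ℝ)*B := by exact_mod_cast hQAB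
  have heps' : (n:ℝ) * eps ≤ (k:ℝ)^2 * (D:ℝ)^2 := by exact_mod_cast heps
  have hn' : 2*(k:ℝ)^2 < n := by exact_mod_cast hn
  have hepsnn : (0:ℝ) ≤ eps := Nat.cast_nonneg _
  have hQnn : (0:ℝ) ≤ Q := Nat.cast_nonneg _
  have hAnn : (0:ℝ) ≤ A := Nat.cast_nonneg _
  have hBnn : (0:ℝ) ≤ B := Nat.cast_nonneg _
  have h2eps : 2*(eps:ℝ) < (D:ℝ)^2 := by
    nlinarith [mul_lt_mul_of_pos_right hn' hd]
  have hPhalf : (D:ℝ)^2 < 2*(P:ℝ) := by linarith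
  have hPpos : (0:ℝ) < P := by linarith
  have hABd : (A:ℝ)*B ≤ (D:ℝ)^2 := by
    have := mul_le_mul hAD' hBD' hBnn hDR.le
    nlinarith [this]
  have hnum : |(A:ℝ)*B*P - Q*(D:ℝ)^2| ≤ (eps:ℝ)*(D:ℝ)^2 := by
    rw [abs_le]
    constructor
    · have t1 : (Q:ℝ)*(D:ℝ)^2 ≤ ((A:ℝ)*B)*(D:ℝ)^2 := mul_le_mul_of_nonneg_right hQAB' hd.le
      have t2 : ((A:ℝ)*B)*((D:ℝ)^2) ≤ ((A:ℝ)*B)*((P:ℝ)+eps) :=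
        mul_le_mul_of_nonneg_left hDP' (mul_nonneg hAnn hBnn)
      have t2' : ((A:ℝ)*B)*((P:ℝ)+eps) = (A:ℝ)*B*P + ((A:ℝ)*B)*eps := by ring
      have t3 : ((A:ℝ)*B)*(eps:ℝ) ≤ (D:ℝ)^2*eps := mul_le_mul_of_nonneg_right hABd hepsnn
      linarith
    · have u1 : (A:ℝ)*B*P ≤ ((Q:ℝ)+eps)*P := mul_le_mul_of_nonneg_right hABQ' hPpos.le
      have u2 : ((Q:ℝ)+eps)*(P:ℝ) ≤ ((Q:ℝ)+eps)*(D:ℝ)^2 :=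
        mul_le_mul_of_nonneg_left hPD' (by linarith)
      have u3 : ((Q:ℝ)+eps)*(D:ℝ)^2 = (Q:ℝ)*(D:ℝ)^2 + (eps:ℝ)*(D:ℝ)^2 := by ring
      linarith
  have hrw : (A:ℝ)/D * ((B:ℝ)/D) - (Q:ℝ)/P
      = ((A:ℝ)*B*P - Q*(D:ℝ)^2)/((D:ℝ)^2*P) := by
    field_simp
  rw [hrw, abs_div, abs_of_pos (by positivity : (0:ℝ) < (D:ℝ)^2*P),
    div_le_div_iff₀ (by positivity) hnR]
  have h6 : |(A:ℝ)*B*P - Q*(D:ℝ)^2| * n ≤ ((eps:ℝ)*(D:ℝ)^2) * n :=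
    mul_le_mul_of_nonneg_right hnum hnR.le
  have h7 : ((n:ℝ)*eps)*(D:ℝ)^2 ≤ ((k:ℝ)^2*(D:ℝ)^2)*(D:ℝ)^2 :=
    mul_le_mul_of_nonneg_right heps' hd.le
  have h8 : (k:ℝ)^2*(D:ℝ)^2*(D:ℝ)^2 ≤ (k:ℝ)^2*(D:ℝ)^2*(2*P) :=
    mul_le_mul_of_nonneg_left hPhalf.le (by positivity)
  linarith [h6, h7, h8]

private lemma pFlag_isEmpty {s m : ℕ} {V : Type} [Fintype V] [IsEmpty V] (G : SimpleGraph V)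
    (θ : Fin s → V) (F : SimpleGraph (Fin m)) (l : Fin s → Fin m) :
    pFlag G θ F l = if m = 0 then 1 else 0 := by
  have hV : Fintype.card V = 0 := Fintype.card_eq_zero
  rcases eq_or_ne m 0 with hm | hm
  · subst hm
    have hcopy : ∀ R : Finset V, FlagCopy G θ F l R := by
      intro R
      refine ⟨fun i => i.elim0, fun a => a.elim0, ?_, fun i => ((l i).elim0), fun x => x.elim0⟩
      rw [Set.range_eq_empty]
      rw [Finset.eq_empty_of_isEmpty R]
      simp
    have h1 : {R : Finset V | R.card = 0 ∧ Set.range θ ⊆ ↑R ∧ FlagCopy G θ F l R}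
        = Set.univ := by
      ext R
      simp only [Set.mem_setOf_eq, Set.mem_univ, iff_true]
      refine ⟨by simp [Finset.eq_empty_of_isEmpty R], fun x _ => (IsEmpty.false x).elim,
        hcopy R⟩
    have h2 : {R : Finset V | R.card = 0 ∧ Set.range θ ⊆ ↑R} = Set.univ := by
      ext R
      simp only [Set.mem_setOf_eq, Set.mem_univ, iff_true]
      exact ⟨by simp [Finset.eq_empty_of_isEmpty R], fun x _ => (IsEmpty.false x).elim⟩
    rw [pFlag, h1, h2, Set.ncard_univ, Nat.card_eq_fintype_card, Fintype.card_finset, hV]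
    norm_num
  · have h1 : {R : Finset V | R.card = m ∧ Set.range θ ⊆ ↑R ∧ FlagCopy G θ F l R} = ∅ := by
      ext R
      simp only [Set.mem_setOf_eq, Set.mem_empty_iff_false, iff_false, not_and]
      intro hc
      rw [Finset.eq_empty_of_isEmpty R] at hc
      simp at hc
      omega
    have h2 : {R : Finset V | R.card = m ∧ Set.range θ ⊆ ↑R} = ∅ := by
      ext R
      simp only [Set.mem_setOf_eq, Set.mem_empty_iff_false, iff_false, not_and]
      intro hc
      rw [Finset.eq_empty_of_isEmpty R] at hc
      simp at hc
      omega
    rw [pFlag, h1, h2]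
    simp [hm]

private lemma pFlagPair_isEmpty {s m : ℕ} {V : Type} [Fintype V] [IsEmpty V]
    (G : SimpleGraph V) (θ : Fin s → V) (Fa Fb : SimpleGraph (Fin m))
    (la lb : Fin s → Fin m) :
    pFlagPair G θ Fa Fb la lb = if m = 0 then 1 else 0 := by
  have hV : Fintype.card V = 0 := Fintype.card_eq_zero
  have hrange : Set.range θ = (∅ : Set V) := Set.eq_empty_of_isEmpty _
  have hinter : ∀ R S : Finset V, (↑R ∩ ↑S : Set V) = Set.range θ := by
    intro R S
    rw [hrange]
    exact Set.eq_empty_of_isEmpty _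
  rcases eq_or_ne m 0 with hm | hm
  · subst hm
    have hcopy : ∀ (F : SimpleGraph (Fin 0)) (l : Fin s → Fin 0) (R : Finset V),
        FlagCopy G θ F l R := by
      intro F l R
      refine ⟨fun i => i.elim0, fun a => a.elim0, ?_, fun i => ((l i).elim0), fun x => x.elim0⟩
      rw [Set.range_eq_empty]
      rw [Finset.eq_empty_of_isEmpty R]
      simp
    have h1 : {P : Finset V × Finset V | P.1.card = 0 ∧ P.2.card = 0 ∧
        (↑P.1 ∩ ↑P.2 : Set V) = Set.range θ ∧
        FlagCopy G θ Fa la P.1 ∧ FlagCopy G θ Fb lb P.2} = Set.univ := by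
      ext P
      simp only [Set.mem_setOf_eq, Set.mem_univ, iff_true]
      exact ⟨by simp [Finset.eq_empty_of_isEmpty P.1], by simp [Finset.eq_empty_of_isEmpty P.2],
        hinter _ _, hcopy _ _ _, hcopy _ _ _⟩
    have h2 : {P : Finset V × Finset V | P.1.card = 0 ∧ P.2.card = 0 ∧
        (↑P.1 ∩ ↑P.2 : Set V) = Set.range θ} = Set.univ := by
      ext P
      simp only [Set.mem_setOf_eq, Set.mem_univ, iff_true]
      exact ⟨by simp [Finset.eq_empty_of_isEmpty P.1], by simp [Finset.eq_empty_of_isEmpty P.2],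
        hinter _ _⟩
    rw [pFlagPair, h1, h2, Set.ncard_univ, Nat.card_eq_fintype_card]
    simp [Fintype.card_finset, hV]
  · have h1 : {P : Finset V × Finset V | P.1.card = m ∧ P.2.card = m ∧
        (↑P.1 ∩ ↑P.2 : Set V) = Set.range θ ∧
        FlagCopy G θ Fa la P.1 ∧ FlagCopy G θ Fb lb P.2} = ∅ := by
      ext P
      simp only [Set.mem_setOf_eq, Set.mem_empty_iff_false, iff_false, not_and]
      intro hc
      rw [Finset.eq_empty_of_isEmpty P.1] at hc
      simp at hc
      omega
    have h2 : {P : Finset V × Finset V | P.1.card = m ∧ P.2.card = m ∧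
        (↑P.1 ∩ ↑P.2 : Set V) = Set.range θ} = ∅ := by
      ext P
      simp only [Set.mem_setOf_eq, Set.mem_empty_iff_false, iff_false, not_and]
      intro hc
      rw [Finset.eq_empty_of_isEmpty P.1] at hc
      simp at hc
      omega
    rw [pFlagPair, h1, h2]
    simp [hm]

end Aux

set_option maxHeartbeats 1000000

/-- For σ-flags `F_a`, `F_b` of size `m` over a fixed type `σ`, the product of
flag densities approximately factorizes: for any graph `G` and any embedding `θ`
of `σ` into `G`,
`p(F_a,θ;G)·p(F_b,θ;G) = p(F_a,F_b,θ;G) + O(1/|V(G)|)`. -/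
theorem stmt18 (s m : ℕ) (σ : SimpleGraph (Fin s))
    (Fa Fb : SimpleGraph (Fin m)) (la lb : Fin s → Fin m)
    (hla : Function.Injective la ∧ ∀ i j, σ.Adj i j ↔ Fa.Adj (la i) (la j))
    (hlb : Function.Injective lb ∧ ∀ i j, σ.Adj i j ↔ Fb.Adj (lb i) (lb j)) :
    ∃ C : ℝ, ∀ (V : Type) (_ : Fintype V) (G : SimpleGraph V) (θ : Fin s → V),
      Function.Injective θ → (∀ i j, σ.Adj i j ↔ G.Adj (θ i) (θ j)) →
      |pFlag G θ Fa la * pFlag G θ Fb lb - pFlagPair G θ Fa Fb la lb|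
        ≤ C / (Fintype.card V : ℝ) := by
  classical
  have hsm : s ≤ m := by
    have := Fintype.card_le_of_injective la hla.1
    simpa using this
  refine ⟨((2*m^2 + 2*m + 1 : ℕ) : ℝ) + 4*(m:ℝ)^2, ?_⟩
  intro V _ G θ hθ _
  set N := Fintype.card V with hN
  -- Case N = 0
  rcases Nat.eq_zero_or_pos N with hN0 | hNpos
  · have : IsEmpty V := Fintype.card_eq_zero_iff.mp hN0
    rw [pFlag_isEmpty, pFlag_isEmpty, pFlagPair_isEmpty]
    rcases eq_or_ne m 0 with hm | hm <;> simp [hm, ← hN, hN0]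
  have hNR : (0:ℝ) < N := by exact_mod_cast hNpos
  -- Case N small
  by_cases hNbig : 2*m^2 + 2*m + 1 ≤ N
  swap
  · have h1 := pFlag_bounds G θ Fa la
    have h2 := pFlag_bounds G θ Fb lb
    have h3 := pFlagPair_bounds G θ Fa Fb la lb
    have habs : |pFlag G θ Fa la * pFlag G θ Fb lb - pFlagPair G θ Fa Fb la lb| ≤ 1 := by
      rw [abs_le]
      constructor
      · nlinarith [h1.1, h2.1, h3.2]
      · nlinarith [h1.2, h2.2, h1.1, h2.1, h3.1]
    refine habs.trans ?_
    rw [le_div_iff₀ hNR, one_mul]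
    have : (N:ℝ) ≤ ((2*m^2 + 2*m + 1 : ℕ) : ℝ) := by
      exact_mod_cast Nat.le_of_lt (by omega)
    nlinarith [sq_nonneg (m:ℝ)]
  -- Main case
  set k := m - s with hk
  set n := N - s with hn
  have hkm : k ≤ m := by omega
  have hk2m2 : k^2 ≤ m^2 := Nat.pow_le_pow_left hkm 2
  have hm2 : 0 ≤ m^2 := Nat.zero_le _
  have hsN : s ≤ N := by linarith
  have hns : n + s = N := Nat.sub_add_cancel hsN
  have hnk : 2*k^2 < n := by
    have h2 : 2*k^2 ≤ 2*m^2 := by linarith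
    refine lt_of_le_of_lt h2 ?_
    linarith
  have hkk : k ≤ k^2 := Nat.le_self_pow two_ne_zero k
  have hkn : k ≤ n := by linarith
  have hn1 : 0 < n := by linarith
  set Ti : Finset V := Finset.univ.image θ with hTidef
  have hTicard : Ti.card = s := by
    rw [hTidef, Finset.card_image_of_injective _ hθ, Finset.card_univ, Fintype.card_fin]
  have hrange : Set.range θ = ↑Ti := by
    rw [hTidef]; simp
  set DS := Finset.univ.filter (fun R : Finset V => R.card = m ∧ Ti ⊆ R) with hDSdef
  set AS := Finset.univ.filter
      (fun R : Finset V => R.card = m ∧ Ti ⊆ R ∧ FlagCopy G θ Fa la R) with hASdef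
  set BS := Finset.univ.filter
      (fun R : Finset V => R.card = m ∧ Ti ⊆ R ∧ FlagCopy G θ Fb lb R) with hBSdef
  set PS := Finset.univ.filter (fun P : Finset V × Finset V =>
      P.1.card = m ∧ P.2.card = m ∧ P.1 ∩ P.2 = Ti) with hPSdef
  set QS := Finset.univ.filter (fun P : Finset V × Finset V =>
      P.1.card = m ∧ P.2.card = m ∧ P.1 ∩ P.2 = Ti ∧
      FlagCopy G θ Fa la P.1 ∧ FlagCopy G θ Fb lb P.2) with hQSdef
  set badS := (DS ×ˢ DS).filter (fun P => P.1 ∩ P.2 ≠ Ti) with hbadSdef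
  -- rewrite the probabilities as finite ratios
  have hInterIff : ∀ R S : Finset V, ((↑R ∩ ↑S : Set V) = Set.range θ) ↔ R ∩ S = Ti := by
    intro R S
    rw [hrange, ← Finset.coe_inter, Finset.coe_inj]
  have hpa : pFlag G θ Fa la = (AS.card : ℝ) / (DS.card : ℝ) := by
    rw [pFlag,
      show {R : Finset V | R.card = m ∧ Set.range θ ⊆ ↑R ∧ FlagCopy G θ Fa la R} = ↑AS by
        ext R; simp [hASdef, hrange, and_assoc],
      show {R : Finset V | R.card = m ∧ Set.range θ ⊆ ↑R} = ↑DS by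
        ext R; simp [hDSdef, hrange],
      Set.ncard_coe_finset, Set.ncard_coe_finset]
  have hpb : pFlag G θ Fb lb = (BS.card : ℝ) / (DS.card : ℝ) := by
    rw [pFlag,
      show {R : Finset V | R.card = m ∧ Set.range θ ⊆ ↑R ∧ FlagCopy G θ Fb lb R} = ↑BS by
        ext R; simp [hBSdef, hrange, and_assoc],
      show {R : Finset V | R.card = m ∧ Set.range θ ⊆ ↑R} = ↑DS by
        ext R; simp [hDSdef, hrange],
      Set.ncard_coe_finset, Set.ncard_coe_finset]
  have hpab : pFlagPair G θ Fa Fb la lb = (QS.card : ℝ) / (PS.card : ℝ) := by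
    rw [pFlagPair,
      show {P : Finset V × Finset V | P.1.card = m ∧ P.2.card = m ∧
          (↑P.1 ∩ ↑P.2 : Set V) = Set.range θ ∧
          FlagCopy G θ Fa la P.1 ∧ FlagCopy G θ Fb lb P.2} = ↑QS by
        ext P; simp [hQSdef, hInterIff P.1 P.2, and_assoc],
      show {P : Finset V × Finset V | P.1.card = m ∧ P.2.card = m ∧
          (↑P.1 ∩ ↑P.2 : Set V) = Set.range θ} = ↑PS by
        ext P; simp [hPSdef, hInterIff P.1 P.2],
      Set.ncard_coe_finset, Set.ncard_coe_finset]
  -- counting facts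
  have hDcard : DS.card = n.choose k := by
    rw [hDSdef, count_supersets m Ti (by omega : Ti.card ≤ m), hTicard]
  have hDpos : 0 < DS.card := by
    rw [hDcard]
    exact Nat.choose_pos hkn
  have hASsub : AS ⊆ DS := by
    intro R hR
    simp only [hASdef, hDSdef, Finset.mem_filter] at *
    tauto
  have hBSsub : BS ⊆ DS := by
    intro R hR
    simp only [hBSdef, hDSdef, Finset.mem_filter] at *
    tauto
  have hQPsub : QS ⊆ PS := by
    intro P hP
    simp only [hQSdef, hPSdef, Finset.mem_filter] at *
    tauto
  have hmemDS : ∀ R : Finset V, R ∈ DS ↔ R.card = m ∧ Ti ⊆ R := by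
    intro R; simp [hDSdef]
  have hPSsub : PS ⊆ DS ×ˢ DS := by
    intro P hP
    simp only [hPSdef, Finset.mem_filter, Finset.mem_univ, true_and] at hP
    rw [Finset.mem_product, hmemDS, hmemDS]
    refine ⟨⟨hP.1, ?_⟩, hP.2.1, ?_⟩
    · rw [← hP.2.2]; exact Finset.inter_subset_left
    · rw [← hP.2.2]; exact Finset.inter_subset_right
  have hQABsub : QS ⊆ AS ×ˢ BS := by
    intro P hP
    simp only [hQSdef, Finset.mem_filter, Finset.mem_univ, true_and] at hP
    rw [Finset.mem_product]
    constructor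
    · simp only [hASdef, Finset.mem_filter, Finset.mem_univ, true_and]
      refine ⟨hP.1, ?_, hP.2.2.2.1⟩
      rw [← hP.2.2.1]; exact Finset.inter_subset_left
    · simp only [hBSdef, Finset.mem_filter, Finset.mem_univ, true_and]
      refine ⟨hP.2.1, ?_, hP.2.2.2.2⟩
      rw [← hP.2.2.1]; exact Finset.inter_subset_right
  have hABQsub : AS ×ˢ BS ⊆ QS ∪ badS := by
    intro P hP
    rw [Finset.mem_product] at hP
    obtain ⟨hP1, hP2⟩ := hP
    simp only [hASdef, Finset.mem_filter, Finset.mem_univ, true_and] at hP1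
    simp only [hBSdef, Finset.mem_filter, Finset.mem_univ, true_and] at hP2
    by_cases hint : P.1 ∩ P.2 = Ti
    · apply Finset.mem_union_left
      simp only [hQSdef, Finset.mem_filter, Finset.mem_univ, true_and]
      exact ⟨hP1.1, hP2.1, hint, hP1.2.2, hP2.2.2⟩
    · apply Finset.mem_union_right
      rw [hbadSdef, Finset.mem_filter, Finset.mem_product, hmemDS, hmemDS]
      exact ⟨⟨⟨hP1.1, hP1.2.1⟩, hP2.1, hP2.2.1⟩, hint⟩
  have hDPsub : DS ×ˢ DS ⊆ PS ∪ badS := by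
    intro P hP
    have hP' := hP
    rw [Finset.mem_product, hmemDS, hmemDS] at hP'
    by_cases hint : P.1 ∩ P.2 = Ti
    · apply Finset.mem_union_left
      simp only [hPSdef, Finset.mem_filter, Finset.mem_univ, true_and]
      exact ⟨hP'.1.1, hP'.2.1, hint⟩
    · apply Finset.mem_union_right
      rw [hbadSdef, Finset.mem_filter]
      exact ⟨hP, hint⟩
  -- the bad-set estimate
  have hbad : n * badS.card ≤ k^2 * DS.card^2 := by
    rcases Nat.eq_zero_or_pos k with hk0 | hkpos
    · have hbadempty : badS = ∅ := by
        rw [Finset.eq_empty_iff_forall_notMem]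
        intro P hP
        rw [hbadSdef, Finset.mem_filter, Finset.mem_product, hmemDS, hmemDS] at hP
        obtain ⟨⟨h1, h2⟩, hne⟩ := hP
        have e1 : Ti = P.1 := Finset.eq_of_subset_of_card_le h1.2 (by omega)
        have e2 : Ti = P.2 := Finset.eq_of_subset_of_card_le h2.2 (by omega)
        exact hne (by rw [← e1, ← e2, Finset.inter_self])
      rw [hbadempty]
      simp
    · -- count via a union over vertices outside Ti
      have hvcount : ∀ v ∈ Tiᶜ,
          (DS.filter (fun R => v ∈ R)).card = (n-1).choose (k-1) := by
        intro v hv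
        have hvnot : v ∉ Ti := Finset.mem_compl.mp hv
        have hveq : DS.filter (fun R => v ∈ R)
            = Finset.univ.filter (fun R : Finset V => R.card = m ∧ insert v Ti ⊆ R) := by
          ext R
          rw [Finset.mem_filter, hmemDS, Finset.mem_filter]
          simp only [Finset.mem_univ, true_and, Finset.insert_subset_iff]
          tauto
        rw [hveq, count_supersets m (insert v Ti)
            (by rw [Finset.card_insert_of_notMem hvnot, hTicard]; omega),
          Finset.card_insert_of_notMem hvnot, hTicard]
        congr 1 <;> omega
      have hbadsub : badS ⊆ Tiᶜ.biUnion
          (fun v => (DS.filter (fun R => v ∈ R)) ×ˢ (DS.filter (fun R => v ∈ R))) := by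
        intro P hP
        rw [hbadSdef, Finset.mem_filter, Finset.mem_product] at hP
        obtain ⟨⟨h1, h2⟩, hne⟩ := hP
        have hTi1 : Ti ⊆ P.1 := ((hmemDS P.1).mp h1).2
        have hTi2 : Ti ⊆ P.2 := ((hmemDS P.2).mp h2).2
        have hss : Ti ⊂ P.1 ∩ P.2 :=
          (Finset.subset_inter hTi1 hTi2).ssubset_of_ne (Ne.symm hne)
        obtain ⟨v, hvmem, hvnot⟩ := Finset.exists_of_ssubset hss
        rw [Finset.mem_inter] at hvmem
        rw [Finset.mem_biUnion]
        refine ⟨v, Finset.mem_compl.mpr hvnot, ?_⟩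
        exact Finset.mem_product.mpr ⟨Finset.mem_filter.mpr ⟨h1, hvmem.1⟩,
          Finset.mem_filter.mpr ⟨h2, hvmem.2⟩⟩
      have hcompl : Tiᶜ.card = n := by
        rw [Finset.card_compl, hTicard]
      have hb1 : badS.card ≤ n * ((n-1).choose (k-1))^2 := by
        calc badS.card ≤ (Tiᶜ.biUnion
            (fun v => (DS.filter (fun R => v ∈ R)) ×ˢ (DS.filter (fun R => v ∈ R)))).card :=
              Finset.card_le_card hbadsub
          _ ≤ ∑ v ∈ Tiᶜ, ((DS.filter (fun R => v ∈ R)) ×ˢ (DS.filter (fun R => v ∈ R))).card :=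
              Finset.card_biUnion_le
          _ = ∑ v ∈ Tiᶜ, ((n-1).choose (k-1))^2 := by
              apply Finset.sum_congr rfl
              intro v hv
              rw [Finset.card_product, hvcount v hv]
              ring
          _ = n * ((n-1).choose (k-1))^2 := by
              rw [Finset.sum_const, hcompl, smul_eq_mul]
      have hkey : n * (n-1).choose (k-1) = n.choose k * k := by
        have h1 : n - 1 + 1 = n := Nat.succ_pred_eq_of_pos hn1
        have h2 : k - 1 + 1 = k := Nat.succ_pred_eq_of_pos hkpos
        have := Nat.add_one_mul_choose_eq (n-1) (k-1)
        rw [h1, h2] at this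
        exact this
      calc n * badS.card ≤ n * (n * ((n-1).choose (k-1))^2) :=
            Nat.mul_le_mul_left n hb1
        _ = (n * (n-1).choose (k-1))^2 := by ring
        _ = (n.choose k * k)^2 := by rw [hkey]
        _ = k^2 * (n.choose k)^2 := by ring
        _ = k^2 * DS.card^2 := by rw [hDcard]
  -- apply the arithmetic lemma
  have hAD : AS.card ≤ DS.card := Finset.card_le_card hASsub
  have hBD : BS.card ≤ DS.card := Finset.card_le_card hBSsub
  have hQP : QS.card ≤ PS.card := Finset.card_le_card hQPsub
  have hPD : PS.card ≤ DS.card^2 := by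
    have := Finset.card_le_card hPSsub
    rw [Finset.card_product] at this
    calc PS.card ≤ DS.card * DS.card := this
      _ = DS.card^2 := by ring
  have hABQ : AS.card * BS.card ≤ QS.card + badS.card := by
    have h1 := Finset.card_le_card hABQsub
    rw [Finset.card_product] at h1
    exact h1.trans (Finset.card_union_le _ _)
  have hDP : DS.card^2 ≤ PS.card + badS.card := by
    have h1 := Finset.card_le_card hDPsub
    rw [Finset.card_product] at h1
    calc DS.card^2 = DS.card * DS.card := by ring
      _ ≤ (PS ∪ badS).card := h1
      _ ≤ PS.card + badS.card := Finset.card_union_le _ _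
  have hQAB : QS.card ≤ AS.card * BS.card := by
    have h1 := Finset.card_le_card hQABsub
    rwa [Finset.card_product] at h1
  have hmain := key_arith AS.card BS.card DS.card PS.card QS.card badS.card n k
    hAD hBD hQP hPD hABQ hDP hQAB hbad hDpos hnk
  rw [hpa, hpb, hpab]
  refine hmain.trans ?_
  -- final numeric bound
  have hnR : (0:ℝ) < n := by
    have : 0 < n := by omega
    exact_mod_cast this
  have hstep : 2*(k:ℝ)^2/(n:ℝ) ≤ 4*(m:ℝ)^2/(N:ℝ) := by
    rw [div_le_div_iff₀ hnR hNR]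
    have hc1 : 2*k^2*N ≤ 4*m^2*n := by
      have e0 : 2*k^2 ≤ 2*m^2 := by linarith
      have e1 : (2*k^2)*N ≤ (2*m^2)*N := Nat.mul_le_mul_right N e0
      have e0' : 2*m ≤ N := by linarith
      have e2 : 2*m^2*(2*m) ≤ 2*m^2*N := Nat.mul_le_mul_left _ e0'
      have e3 : N ≤ n + m := by omega
      have e4 : 4*m^2*N ≤ 4*m^2*(n+m) := Nat.mul_le_mul_left _ e3
      have e2' : 4*(m^2*m) ≤ 2*m^2*N := by
        calc 4*(m^2*m) = 2*m^2*(2*m) := by ring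
          _ ≤ 2*m^2*N := e2
      have e4' : 4*m^2*N ≤ 4*m^2*n + 4*(m^2*m) := by
        calc 4*m^2*N ≤ 4*m^2*(n+m) := e4
          _ = 4*m^2*n + 4*(m^2*m) := by ring
      linarith
    calc 2*(k:ℝ)^2*N = ((2*k^2*N : ℕ) : ℝ) := by push_cast; ring
      _ ≤ ((4*m^2*n : ℕ) : ℝ) := by exact_mod_cast hc1
      _ = 4*(m:ℝ)^2*n := by push_cast; ring
  refine hstep.trans ?_
  have hC : 4*(m:ℝ)^2 ≤ ((2*m^2 + 2*m + 1 : ℕ) : ℝ) + 4*(m:ℝ)^2 := by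
    have : (0:ℝ) ≤ ((2*m^2 + 2*m + 1 : ℕ) : ℝ) := Nat.cast_nonneg _
    linarith
  exact (div_le_div_iff_of_pos_right hNR).mpr hC
end
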